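/- In any execution of the algorithm MaxMatch, the total number of moves in which a single vertex writes True into its end variable (i.e., executes a rule after which its end variable is True while it was False before) is at most 3μ. -/

import Mathlib

open Classical

section MaxMatchPreamble

variable {V : Type*} [Fintype V] [LinearOrder V]

/-- Strict comparison on identifiers where `none` (null) counts as greater
than every identifier. -/
def optLT : Option V → Option V → Prop
  | some x, some y => x < y
  | some _, none => True
  | none, _ => False

/-- A configuration of the MaxMatch algorithm: the variables `p`, `α`, `β`
(`a`,`b` here) and the booleans `s`, `end` (`e` here) of every vertex. -/
structure MMConfig (V : Type*) where
  p : V → Option V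
  a : V → Option V
  b : V → Option V
  s : V → Bool
  e : V → Bool

/-- The local state of one vertex. -/
structure MMLocal (V : Type*) where
  p : Option V
  a : Option V
  b : Option V
  s : Bool
  e : Bool

/-- The local state of vertex `u` in configuration `C`. -/
def MMConfig.loc (C : MMConfig V) (u : V) : MMLocal V :=
  ⟨C.p u, C.a u, C.b u, C.s u, C.e u⟩

/-- `m` encodes a maximal matching of `G`: `m u = some v` iff `(u,v)` is a
matching edge, `m u = none` iff `u` is single. -/
structure MaxMatchingOn (G : SimpleGraph V) (m : V → Option V) : Prop where
  adj : ∀ u v, m u = some v → G.Adj u v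
  symm : ∀ u v, m u = some v → m v = some u
  maximal : ∀ u v, G.Adj u v → m u ≠ none ∨ m v ≠ none

/-- `Lowest(S)`: the minimum-identifier element of `S`, `none` if `S = ∅`. -/
noncomputable def lowestSet (S : Set V) : Option V :=
  if h : (Finset.univ.filter fun x => x ∈ S).Nonempty
  then some ((Finset.univ.filter fun x => x ∈ S).min' h) else none

/-- `Lowest` of a finite set of identifiers-or-null: `none` (null) elements are
greater than all identifiers, hence ignored. -/
noncomputable def lowestOpt (S : Finset (Option V)) : Option V :=
  lowestSet {x : V | some x ∈ S}

/-- Truth value of a proposition. -/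
noncomputable def pb (P : Prop) : Bool := if P then true else false

variable (G : SimpleGraph V) (m : V → Option V)

/-- The candidate set considered by `BestRematch(u)`. -/
def candSet (C : MMConfig V) (u : V) : Set V :=
  {x | G.Adj u x ∧ m x = none ∧ (C.p x = some u ∨ C.e x = false)}

/-- `BestRematch(u)`. -/
noncomputable def bestRematch (C : MMConfig V) (u : V) : Option V × Option V :=
  let a := lowestSet (candSet G m C u)
  (a, a.elim none fun w => lowestSet (candSet G m C u \ {w}))

/-- `AskFirst(u)`. -/
noncomputable def askFirst (C : MMConfig V) (u : V) : Option V :=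
  match m u with
  | none => none
  | some v =>
      if C.a u ≠ none ∧ C.a v ≠ none ∧
         2 ≤ ({C.a u, C.b u, C.a v, C.b v} : Finset (Option V)).card ∧
         (optLT (C.a u) (C.a v) ∨ (C.a u = C.a v ∧ C.b u = none) ∨
          (C.a u = C.a v ∧ C.b v ≠ none ∧ u < v))
      then C.a u else none

/-- `AskSecond(u)`. -/
noncomputable def askSecond (C : MMConfig V) (u : V) : Option V :=
  match m u with
  | none => none
  | some v =>
      if askFirst m C v ≠ none
      then lowestOpt (({C.a u, C.b u} : Finset (Option V)) \ {C.a v})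
      else none

/-- `Ask(u)`. -/
noncomputable def ask (C : MMConfig V) (u : V) : Option V :=
  if askFirst m C u = none then askSecond m C u else askFirst m C u

/-- Guard of rule `ResetEnd` (single vertices). -/
def guardResetEnd (C : MMConfig V) (x : V) : Prop :=
  C.p x = none ∧ C.e x = true

/-- Guard of rule `UpdateP` (single vertices). -/
def guardUpdateP (C : MMConfig V) (x : V) : Prop :=
  (C.p x = none ∧ ∃ w, G.Adj x w ∧ m w ≠ none ∧ C.p w = some x) ∨
  (∃ w, C.p x = some w ∧ ¬ (G.Adj x w ∧ m w ≠ none)) ∨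
  (∃ w, C.p x = some w ∧ C.p w ≠ some x)

/-- Guard of rule `UpdateEnd` (single vertices). -/
def guardUpdateEnd (C : MMConfig V) (x : V) : Prop :=
  ∃ w, C.p x = some w ∧ G.Adj x w ∧ m w ≠ none ∧ C.p w = some x ∧ C.e x ≠ C.e w

/-- `o ∈ single(N(u)) ∪ {null}`. -/
def inSNopt (u : V) (o : Option V) : Prop :=
  o = none ∨ ∃ w, o = some w ∧ G.Adj u w ∧ m w = none

/-- First part (first four disjuncts) of the guard of rule `Update`. -/
def guardUpdateA (C : MMConfig V) (u : V) : Prop :=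
  optLT (C.b u) (C.a u) ∨
  (¬ inSNopt G m u (C.a u) ∨ ¬ inSNopt G m u (C.b u)) ∨
  (C.a u = C.b u ∧ C.a u ≠ none) ∨
  ¬ inSNopt G m u (C.p u)

/-- Guard of rule `Update` (matched vertices). -/
def guardUpdate (C : MMConfig V) (u : V) : Prop :=
  guardUpdateA G m C u ∨
  ((C.a u, C.b u) ≠ bestRematch G m C u ∧
    (C.p u = none ∨ ∃ w, C.p u = some w ∧ C.p w ≠ some u ∧ C.e w = true))

/-- `p_{p_u} = u`. -/
def ppEq (C : MMConfig V) (u : V) : Prop :=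
  ∃ w, C.p u = some w ∧ C.p w = some u

/-- Value assigned to `s_u` by `MatchFirst` (`v = m_u`). -/
def mfS (C : MMConfig V) (u v : V) : Prop :=
  C.p u = askFirst m C u ∧ ppEq C u ∧ (C.p v = askSecond m C v ∨ C.p v = none)

/-- Value assigned to `end_u` by `MatchFirst` (`v = m_u`). -/
def mfE (C : MMConfig V) (u v : V) : Prop :=
  C.p u = askFirst m C u ∧ ppEq C u ∧ C.s u = true ∧
  C.p v = askSecond m C v ∧ C.e v = true

/-- Guard of rule `MatchFirst` (matched vertices). -/
def guardMatchFirst (C : MMConfig V) (u : V) : Prop :=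
  askFirst m C u ≠ none ∧ ∃ v, m u = some v ∧
    (C.p u ≠ askFirst m C u ∨ ¬ (C.s u = true ↔ mfS m C u v) ∨
     ¬ (C.e u = true ↔ mfE m C u v))

/-- Value assigned to `end_u` (and then `s_u`) by `MatchSecond` (`v = m_u`). -/
def msE (C : MMConfig V) (u v : V) : Prop :=
  C.p u = askSecond m C u ∧ ppEq C u ∧ C.p v = askFirst m C v

/-- Guard of rule `MatchSecond` (matched vertices). -/
def guardMatchSecond (C : MMConfig V) (u : V) : Prop :=
  askSecond m C u ≠ none ∧ ∃ v, m u = some v ∧ C.s v = true ∧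
    (C.p u ≠ askSecond m C u ∨ ¬ (C.e u = true ↔ msE m C u v) ∨ C.s u ≠ C.e u)

/-- Guard of rule `ResetMatch` (matched vertices). -/
def guardResetMatch (C : MMConfig V) (u : V) : Prop :=
  (askFirst m C u = none ∧ askSecond m C u = none ∧
    ¬ (C.p u = none ∧ C.s u = false ∧ C.e u = false)) ∨
  (askSecond m C u ≠ none ∧ C.p u ≠ none ∧ ∃ v, m u = some v ∧ C.s v = false)

/-- The local state of `u` after it atomically executes the command of its
highest-priority true-guard rule (its state is unchanged if no guard holds). -/
noncomputable def localNext (C : MMConfig V) (u : V) : MMLocal V :=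
  if m u = none then
    if guardResetEnd C u then ⟨C.p u, C.a u, C.b u, C.s u, false⟩
    else if guardUpdateP G m C u then
      ⟨lowestSet {w | G.Adj u w ∧ C.p w = some u}, C.a u, C.b u, C.s u, false⟩
    else if guardUpdateEnd G m C u then
      ⟨C.p u, C.a u, C.b u, C.s u, (C.p u).elim (C.e u) C.e⟩
    else C.loc u
  else
    if guardUpdate G m C u then
      ⟨none, (bestRematch G m C u).1, (bestRematch G m C u).2, false, false⟩
    else if guardMatchFirst m C u then
      ⟨askFirst m C u, C.a u, C.b u,
        pb (∃ v, m u = some v ∧ mfS m C u v),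
        pb (∃ v, m u = some v ∧ mfE m C u v)⟩
    else if guardMatchSecond m C u then
      ⟨askSecond m C u, C.a u, C.b u,
        pb (∃ v, m u = some v ∧ msE m C u v),
        pb (∃ v, m u = some v ∧ msE m C u v)⟩
    else if guardResetMatch m C u then ⟨none, C.a u, C.b u, false, false⟩
    else C.loc u

/-- `u` is activable (eligible for some rule) in `C`. -/
def Activable (C : MMConfig V) (u : V) : Prop :=
  (m u = none ∧ (guardResetEnd C u ∨ guardUpdateP G m C u ∨ guardUpdateEnd G m C u)) ∨
  (m u ≠ none ∧ (guardUpdate G m C u ∨ guardMatchFirst m C u ∨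
    guardMatchSecond m C u ∨ guardResetMatch m C u))

/-- A configuration is stable when no vertex is activable. -/
def Stable (C : MMConfig V) : Prop := ∀ u, ¬ Activable G m C u

/-- One transition of the adversarial distributed daemon: the nonempty set `A`
of activable vertices simultaneously execute their (highest-priority) rules. -/
def StepOn (C C' : MMConfig V) (A : Set V) : Prop :=
  A.Nonempty ∧ (∀ u ∈ A, Activable G m C u) ∧
  (∀ u ∈ A, C'.loc u = localNext G m C u) ∧
  (∀ u, u ∉ A → C'.loc u = C.loc u)

/-- A (maximal) execution, padded with stuttering once a stable configuration is
reached: at each index either a genuine transition occurs, or the configuration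
is stable and nothing moves.  `u ∈ act i` means `u` makes a move in transition
`i ↦ i+1`. -/
structure MMExecution (G : SimpleGraph V) (m : V → Option V) where
  cfg : ℕ → MMConfig V
  act : ℕ → Set V
  valid : ∀ i, StepOn G m (cfg i) (cfg (i+1)) (act i) ∨
    (act i = ∅ ∧ Stable G m (cfg i) ∧ cfg (i+1) = cfg i)

/-- μ: the number of matched vertices. -/
noncomputable def muV : ℕ := (Finset.univ.filter fun u : V => m u ≠ none).card

/-- σ: the number of single vertices. -/
noncomputable def sigmaV : ℕ := (Finset.univ.filter fun u : V => m u = none).card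

/-- The matching `M` as a relation. -/
def Mrel (a b : V) : Prop := m a = some b

/-- The output edge set `M⁺` of a configuration, as a relation. -/
def Mplus (C : MMConfig V) (a b : V) : Prop :=
  (m a = some b ∧ C.p a = none ∧ C.p b = none) ∨
  (G.Adj a b ∧ m a ≠ some b ∧ C.p a = some b ∧ C.p b = some a)

/-- `(x,u,v,y)` is a 3-augmenting path on `(G, M')`. -/
def IsAug3 (M' : V → V → Prop) (x u v y : V) : Prop :=
  x ≠ u ∧ x ≠ v ∧ x ≠ y ∧ u ≠ v ∧ u ≠ y ∧ v ≠ y ∧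
  G.Adj x u ∧ G.Adj u v ∧ G.Adj v y ∧
  M' u v ∧ ¬ M' x u ∧ ¬ M' v y

end MaxMatchPreamble
set_option linter.unusedSectionVars false

section Stmt19Aux

variable {V : Type*} [Fintype V] [LinearOrder V]

lemma pb_true {P : Prop} (h : P) : pb P = true := by simp [pb, h]

lemma of_pb_true {P : Prop} (h : pb P = true) : P := by
  by_contra hc; simp [pb, hc] at h

lemma optLT_asymm {a b : Option V} (h1 : optLT a b) (h2 : optLT b a) : False := by
  cases a <;> cases b <;> simp [optLT] at h1 h2
  exact absurd h2 (not_lt_of_gt h1)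

lemma optLT_irrefl {a : Option V} (h : optLT a a) : False := by
  cases a <;> simp [optLT] at h

lemma lowestOpt_eq_none {S : Finset (Option V)} (h : ∀ x : V, some x ∉ S) :
    lowestOpt S = none := by
  unfold lowestOpt lowestSet
  split
  · next h' =>
      obtain ⟨x, hx⟩ := h'
      simp only [Finset.mem_filter, Set.mem_setOf_eq] at hx
      exact absurd hx.2 (h x)
  · rfl

variable (G : SimpleGraph V) (m : V → Option V)

lemma askFirst_eq {C : MMConfig V} {u v : V} (huv : m u = some v) :
    askFirst m C u =
      if C.a u ≠ none ∧ C.a v ≠ none ∧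
         2 ≤ ({C.a u, C.b u, C.a v, C.b v} : Finset (Option V)).card ∧
         (optLT (C.a u) (C.a v) ∨ (C.a u = C.a v ∧ C.b u = none) ∨
          (C.a u = C.a v ∧ C.b v ≠ none ∧ u < v))
      then C.a u else none := by
  unfold askFirst; rw [huv]

lemma askSecond_eq {C : MMConfig V} {u v : V} (huv : m u = some v) :
    askSecond m C u =
      if askFirst m C v ≠ none
      then lowestOpt (({C.a u, C.b u} : Finset (Option V)) \ {C.a v})
      else none := by
  unfold askSecond; rw [huv]

lemma askFirst_elim {C : MMConfig V} {u v : V} (huv : m u = some v)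
    (h : askFirst m C u ≠ none) :
    askFirst m C u = C.a u ∧ C.a u ≠ none ∧ C.a v ≠ none ∧
      (optLT (C.a u) (C.a v) ∨ (C.a u = C.a v ∧ C.b u = none) ∨
        (C.a u = C.a v ∧ C.b v ≠ none ∧ u < v)) := by
  rw [askFirst_eq m huv] at h ⊢
  by_cases hc : C.a u ≠ none ∧ C.a v ≠ none ∧
      2 ≤ ({C.a u, C.b u, C.a v, C.b v} : Finset (Option V)).card ∧
      (optLT (C.a u) (C.a v) ∨ (C.a u = C.a v ∧ C.b u = none) ∨
        (C.a u = C.a v ∧ C.b v ≠ none ∧ u < v))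
  · rw [if_pos hc]; exact ⟨rfl, hc.1, hc.2.1, hc.2.2.2⟩
  · rw [if_neg hc] at h; exact absurd rfl h

/-- Key structural lemma: if `AskFirst(u) ≠ null` then `AskSecond(u) = null`. -/
lemma askSecond_eq_none_of_askFirst {C : MMConfig V} {u v : V}
    (huv : m u = some v) (hvu : m v = some u)
    (h : askFirst m C u ≠ none) : askSecond m C u = none := by
  rw [askSecond_eq m huv]
  by_cases hv : askFirst m C v = none
  · rw [if_neg (by simpa using hv)]
  · rw [if_pos hv]
    obtain ⟨-, hau, hav, hor⟩ := askFirst_elim m huv h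
    obtain ⟨-, -, -, hor'⟩ := askFirst_elim m hvu hv
    have hkey : C.a u = C.a v ∧ C.b u = none := by
      rcases hor with h1 | ⟨he, hb⟩ | ⟨he, hbv, hlt⟩
      · rcases hor' with h1' | ⟨he', hb'⟩ | ⟨he', hbu', hlt'⟩
        · exact absurd h1' (fun hh => optLT_asymm h1 hh)
        · rw [he'] at h1; exact absurd h1 (fun hh => optLT_irrefl hh)
        · rw [he'] at h1; exact absurd h1 (fun hh => optLT_irrefl hh)
      · exact ⟨he, hb⟩
      · rcases hor' with h1' | ⟨he', hb'⟩ | ⟨he', hbu', hlt'⟩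
        · rw [he] at h1'; exact absurd h1' (fun hh => optLT_irrefl hh)
        · exact absurd hb' hbv
        · exact absurd hlt' (not_lt_of_gt hlt)
    apply lowestOpt_eq_none
    intro x hx
    rw [Finset.mem_sdiff, Finset.mem_insert, Finset.mem_singleton,
      Finset.mem_singleton] at hx
    rcases hx with ⟨h1 | h1, h2⟩
    · exact h2 (by rw [h1, hkey.1])
    · rw [hkey.2] at h1; exact nomatch h1

end Stmt19Aux
section Stmt19Aux2

variable {V : Type*} [Fintype V] [LinearOrder V]

lemma loc_p {C : MMConfig V} {u : V} {L : MMLocal V} (h : C.loc u = L) :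
    C.p u = L.p := congrArg MMLocal.p h
lemma loc_a {C : MMConfig V} {u : V} {L : MMLocal V} (h : C.loc u = L) :
    C.a u = L.a := congrArg MMLocal.a h
lemma loc_b {C : MMConfig V} {u : V} {L : MMLocal V} (h : C.loc u = L) :
    C.b u = L.b := congrArg MMLocal.b h
lemma loc_s {C : MMConfig V} {u : V} {L : MMLocal V} (h : C.loc u = L) :
    C.s u = L.s := congrArg MMLocal.s h
lemma loc_e {C : MMConfig V} {u : V} {L : MMLocal V} (h : C.loc u = L) :
    C.e u = L.e := congrArg MMLocal.e h

variable {G : SimpleGraph V} {m : V → Option V}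

lemma step_loc (E : MMExecution G m) (i : ℕ) (u : V) :
    (E.cfg (i+1)).loc u = localNext G m (E.cfg i) u ∨
      (E.cfg (i+1)).loc u = (E.cfg i).loc u := by
  rcases E.valid i with ⟨-, -, hA, hN⟩ | ⟨-, -, hC⟩
  · by_cases hu : u ∈ E.act i
    · exact Or.inl (hA u hu)
    · exact Or.inr (hN u hu)
  · exact Or.inr (by rw [hC])

/-- Case analysis of one step at a single vertex. -/
lemma single_step (E : MMExecution G m) (i : ℕ) (x : V) (hx : m x = none) :
    (E.cfg (i+1)).loc x = (E.cfg i).loc x ∨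
    (guardResetEnd (E.cfg i) x ∧
      (E.cfg (i+1)).loc x =
        ⟨(E.cfg i).p x, (E.cfg i).a x, (E.cfg i).b x, (E.cfg i).s x, false⟩) ∨
    (¬ guardResetEnd (E.cfg i) x ∧ guardUpdateP G m (E.cfg i) x ∧
      (E.cfg (i+1)).loc x =
        ⟨lowestSet {w | G.Adj x w ∧ (E.cfg i).p w = some x},
          (E.cfg i).a x, (E.cfg i).b x, (E.cfg i).s x, false⟩) ∨
    (¬ guardResetEnd (E.cfg i) x ∧ ¬ guardUpdateP G m (E.cfg i) x ∧
      guardUpdateEnd G m (E.cfg i) x ∧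
      (E.cfg (i+1)).loc x =
        ⟨(E.cfg i).p x, (E.cfg i).a x, (E.cfg i).b x, (E.cfg i).s x,
          ((E.cfg i).p x).elim ((E.cfg i).e x) (E.cfg i).e⟩) := by
  rcases step_loc E i x with h | h
  · rw [h]
    unfold localNext
    rw [if_pos hx]
    by_cases h1 : guardResetEnd (E.cfg i) x
    · rw [if_pos h1]; exact Or.inr (Or.inl ⟨h1, rfl⟩)
    · rw [if_neg h1]
      by_cases h2 : guardUpdateP G m (E.cfg i) x
      · rw [if_pos h2]; exact Or.inr (Or.inr (Or.inl ⟨h1, h2, rfl⟩))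
      · rw [if_neg h2]
        by_cases h3 : guardUpdateEnd G m (E.cfg i) x
        · rw [if_pos h3]; exact Or.inr (Or.inr (Or.inr ⟨h1, h2, h3, rfl⟩))
        · rw [if_neg h3]; exact Or.inl rfl
  · exact Or.inl h

/-- Case analysis of one step at a matched vertex. -/
lemma matched_step (E : MMExecution G m) (i : ℕ) (u : V) (hu : m u ≠ none) :
    (E.cfg (i+1)).loc u = (E.cfg i).loc u ∨
    (guardUpdate G m (E.cfg i) u ∧
      (E.cfg (i+1)).loc u =
        ⟨none, (bestRematch G m (E.cfg i) u).1, (bestRematch G m (E.cfg i) u).2,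
          false, false⟩) ∨
    (¬ guardUpdate G m (E.cfg i) u ∧ guardMatchFirst m (E.cfg i) u ∧
      (E.cfg (i+1)).loc u =
        ⟨askFirst m (E.cfg i) u, (E.cfg i).a u, (E.cfg i).b u,
          pb (∃ v, m u = some v ∧ mfS m (E.cfg i) u v),
          pb (∃ v, m u = some v ∧ mfE m (E.cfg i) u v)⟩) ∨
    (¬ guardUpdate G m (E.cfg i) u ∧ ¬ guardMatchFirst m (E.cfg i) u ∧
      guardMatchSecond m (E.cfg i) u ∧
      (E.cfg (i+1)).loc u =
        ⟨askSecond m (E.cfg i) u, (E.cfg i).a u, (E.cfg i).b u,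
          pb (∃ v, m u = some v ∧ msE m (E.cfg i) u v),
          pb (∃ v, m u = some v ∧ msE m (E.cfg i) u v)⟩) ∨
    (¬ guardUpdate G m (E.cfg i) u ∧ ¬ guardMatchFirst m (E.cfg i) u ∧
      ¬ guardMatchSecond m (E.cfg i) u ∧ guardResetMatch m (E.cfg i) u ∧
      (E.cfg (i+1)).loc u =
        ⟨none, (E.cfg i).a u, (E.cfg i).b u, false, false⟩) := by
  rcases step_loc E i u with h | h
  · rw [h]
    unfold localNext
    rw [if_neg hu]
    by_cases h1 : guardUpdate G m (E.cfg i) u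
    · rw [if_pos h1]; exact Or.inr (Or.inl ⟨h1, rfl⟩)
    · rw [if_neg h1]
      by_cases h2 : guardMatchFirst m (E.cfg i) u
      · rw [if_pos h2]; exact Or.inr (Or.inr (Or.inl ⟨h1, h2, rfl⟩))
      · rw [if_neg h2]
        by_cases h3 : guardMatchSecond m (E.cfg i) u
        · rw [if_pos h3]; exact Or.inr (Or.inr (Or.inr (Or.inl ⟨h1, h2, h3, rfl⟩)))
        · rw [if_neg h3]
          by_cases h4 : guardResetMatch m (E.cfg i) u
          · rw [if_pos h4]; exact Or.inr (Or.inr (Or.inr (Or.inr ⟨h1, h2, h3, h4, rfl⟩)))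
          · rw [if_neg h4]; exact Or.inl rfl
  · exact Or.inl h

end Stmt19Aux2
section Stmt19Aux3

variable {V : Type*} [Fintype V] [LinearOrder V]
variable {G : SimpleGraph V} {m : V → Option V}

lemma loc_p' (C : MMConfig V) (u : V) : (C.loc u).p = C.p u := rfl
lemma loc_a' (C : MMConfig V) (u : V) : (C.loc u).a = C.a u := rfl
lemma loc_b' (C : MMConfig V) (u : V) : (C.loc u).b = C.b u := rfl
lemma loc_s' (C : MMConfig V) (u : V) : (C.loc u).s = C.s u := rfl
lemma loc_e' (C : MMConfig V) (u : V) : (C.loc u).e = C.e u := rfl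

lemma askFirst_congr {C C' : MMConfig V} {u v : V} (huv : m u = some v)
    (h1 : C.a u = C'.a u) (h2 : C.b u = C'.b u)
    (h3 : C.a v = C'.a v) (h4 : C.b v = C'.b v) :
    askFirst m C u = askFirst m C' u := by
  rw [askFirst_eq m huv, askFirst_eq m huv, h1, h2, h3, h4]

lemma askSecond_congr {C C' : MMConfig V} {u v : V}
    (huv : m u = some v) (hvu : m v = some u)
    (h1 : C.a u = C'.a u) (h2 : C.b u = C'.b u)
    (h3 : C.a v = C'.a v) (h4 : C.b v = C'.b v) :
    askSecond m C u = askSecond m C' u := by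
  rw [askSecond_eq m huv, askSecond_eq m huv,
    askFirst_congr hvu h3 h4 h1 h2, h1, h2, h3]

lemma guardUpdateA_congr {C C' : MMConfig V} {u : V}
    (h1 : C.a u = C'.a u) (h2 : C.b u = C'.b u) (h3 : C.p u = C'.p u) :
    guardUpdateA G m C u ↔ guardUpdateA G m C' u := by
  unfold guardUpdateA
  rw [h1, h2, h3]

lemma update_blocked {C : MMConfig V} {u x : V}
    (hA : ¬ guardUpdateA G m C u) (hpu : C.p u = some x) (hpx : C.p x = some u) :
    ¬ guardUpdate G m C u := by
  rintro (h | ⟨-, hp | ⟨w, hw, hne, -⟩⟩)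
  · exact hA h
  · rw [hpu] at hp; exact nomatch hp
  · rw [hpu] at hw
    obtain rfl : w = x := (Option.some.injEq _ _).mp hw.symm
    exact hne hpx

lemma mfS_of_mfE {C : MMConfig V} {u v : V} (h : mfE m C u v) : mfS m C u v :=
  ⟨h.1, h.2.1, Or.inl h.2.2.2.1⟩

lemma inSNopt_elim {C : MMConfig V} {u x : V}
    (hA : ¬ guardUpdateA G m C u) (hpu : C.p u = some x) :
    G.Adj u x ∧ m x = none := by
  have h : inSNopt G m u (C.p u) := by
    by_contra hc
    exact hA (Or.inr (Or.inr (Or.inr hc)))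
  rcases h with h | ⟨w, hw, hadj, hs⟩
  · rw [hpu] at h; exact nomatch h
  · rw [hpu] at hw
    obtain rfl : x = w := (Option.some.injEq _ _).mp hw
    exact ⟨hadj, hs⟩

lemma single_lock (E : MMExecution G m) (i : ℕ) {x w : V}
    (hx : m x = none) (hw : m w ≠ none) (hadj : G.Adj x w)
    (hpx : (E.cfg i).p x = some w) (hpw : (E.cfg i).p w = some x) :
    (E.cfg (i+1)).p x = some w ∧
      ((E.cfg i).e w = true → (E.cfg i).e x = true → (E.cfg (i+1)).e x = true) := by
  rcases single_step E i x hx with h | ⟨⟨hp, -⟩, -⟩ | ⟨-, hg, -⟩ | ⟨-, -, -, h⟩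
  · rw [loc_p h, loc_e h]
    exact ⟨hpx, fun _ h2 => h2⟩
  · rw [hpx] at hp; exact nomatch hp
  · exfalso
    rcases hg with ⟨hp, -⟩ | ⟨w', hw', hnot⟩ | ⟨w', hw', hne⟩
    · rw [hpx] at hp; exact nomatch hp
    · rw [hpx] at hw'
      obtain rfl : w' = w := (Option.some.injEq _ _).mp hw'.symm
      exact hnot ⟨hadj, hw⟩
    · rw [hpx] at hw'
      obtain rfl : w' = w := (Option.some.injEq _ _).mp hw'.symm
      exact hne hpw
  · rw [loc_p h, loc_e h]
    refine ⟨hpx, fun h1 _ => ?_⟩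
    rw [hpx]
    exact h1

lemma some_inj_of {u v v' : V} (h1 : m u = some v) (h2 : m u = some v') : v' = v := by
  rw [h1] at h2; exact ((Option.some.injEq _ _).mp h2).symm

lemma pab_const_of_e_true (E : MMExecution G m) (t : ℕ) (u : V)
    (h1 : (E.cfg t).e u = true) (h2 : (E.cfg (t+1)).e u = true) :
    (E.cfg (t+1)).p u = (E.cfg t).p u ∧ (E.cfg (t+1)).a u = (E.cfg t).a u ∧
      (E.cfg (t+1)).b u = (E.cfg t).b u := by
  by_cases hmu : m u = none
  · rcases single_step E t u hmu with h | ⟨-, h⟩ | ⟨-, hg, h⟩ | ⟨-, -, -, h⟩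
    · exact ⟨loc_p h, loc_a h, loc_b h⟩
    · rw [loc_e h] at h2; exact Bool.noConfusion h2
    · rw [loc_e h] at h2; exact Bool.noConfusion h2
    · exact ⟨loc_p h, loc_a h, loc_b h⟩
  · rcases matched_step E t u hmu with h | ⟨-, h⟩ | ⟨-, -, h⟩ | ⟨-, -, -, h⟩ | ⟨-, -, -, -, h⟩
    · exact ⟨loc_p h, loc_a h, loc_b h⟩
    · rw [loc_e h] at h2; exact Bool.noConfusion h2
    · obtain ⟨v, huv, hmfE⟩ := of_pb_true (loc_e h ▸ h2)
      refine ⟨?_, loc_a h, loc_b h⟩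
      rw [loc_p h, ← hmfE.1]
    · obtain ⟨v, huv, hmsE⟩ := of_pb_true (loc_e h ▸ h2)
      refine ⟨?_, loc_a h, loc_b h⟩
      rw [loc_p h, ← hmsE.1]
    · rw [loc_e h] at h2; exact Bool.noConfusion h2

lemma event_anatomy (E : MMExecution G m) (i : ℕ) (x : V) (hx : m x = none)
    (he0 : (E.cfg i).e x = false) (he1 : (E.cfg (i+1)).e x = true) :
    ∃ w, (E.cfg i).p x = some w ∧ G.Adj x w ∧ m w ≠ none ∧
      (E.cfg i).p w = some x ∧ (E.cfg i).e w = true ∧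
      (E.cfg (i+1)).p x = some w ∧ (E.cfg (i+1)).e x = true := by
  rcases single_step E i x hx with h | ⟨-, h⟩ | ⟨-, -, h⟩ | ⟨-, -, hg, h⟩
  · rw [loc_e h, loc_e', he0] at he1; exact Bool.noConfusion he1
  · rw [loc_e h] at he1; exact Bool.noConfusion he1
  · rw [loc_e h] at he1; exact Bool.noConfusion he1
  · obtain ⟨w, hpxw, hadj, hmw, hpwx, -⟩ := hg
    refine ⟨w, hpxw, hadj, hmw, hpwx, ?_, ?_, he1⟩
    · have := loc_e h
      rw [hpxw] at this
      rw [he1] at this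
      exact this.symm
    · rw [loc_p h]; exact hpxw

lemma rise_anatomy (E : MMExecution G m) (r : ℕ) {u v : V} (huv : m u = some v)
    (he0 : (E.cfg r).e u = false) (he1 : (E.cfg (r+1)).e u = true) :
    ¬ guardUpdate G m (E.cfg r) u ∧
    (E.cfg (r+1)).a u = (E.cfg r).a u ∧ (E.cfg (r+1)).b u = (E.cfg r).b u ∧
    (E.cfg (r+1)).p u = (E.cfg r).p u ∧ (E.cfg (r+1)).s u = true ∧
    ((guardMatchFirst m (E.cfg r) u ∧ mfE m (E.cfg r) u v) ∨
     (¬ guardMatchFirst m (E.cfg r) u ∧ guardMatchSecond m (E.cfg r) u ∧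
       msE m (E.cfg r) u v)) := by
  have hmu : m u ≠ none := by rw [huv]; exact Option.some_ne_none _
  rcases matched_step E r u hmu with h | ⟨-, h⟩ | ⟨hU, hMF, h⟩ | ⟨hU, hMF, hMS, h⟩ |
    ⟨-, -, -, -, h⟩
  · rw [loc_e h, loc_e', he0] at he1; exact Bool.noConfusion he1
  · rw [loc_e h] at he1; exact Bool.noConfusion he1
  · obtain ⟨v', hv', hmfE⟩ := of_pb_true (loc_e h ▸ he1)
    obtain rfl := some_inj_of (m := m) huv hv'
    refine ⟨hU, loc_a h, loc_b h, by rw [loc_p h, ← hmfE.1], ?_, Or.inl ⟨hMF, hmfE⟩⟩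
    rw [loc_s h]
    exact pb_true ⟨v', huv, mfS_of_mfE hmfE⟩
  · obtain ⟨v', hv', hmsE⟩ := of_pb_true (loc_e h ▸ he1)
    obtain rfl := some_inj_of (m := m) huv hv'
    refine ⟨hU, loc_a h, loc_b h, by rw [loc_p h, ← hmsE.1], ?_, Or.inr ⟨hMF, hMS, hmsE⟩⟩
    rw [loc_s h]
    exact pb_true ⟨v', huv, hmsE⟩
  · rw [loc_e h] at he1; exact Bool.noConfusion he1

end Stmt19Aux3
section Stmt19Aux4

variable {V : Type*} [Fintype V] [LinearOrder V]
variable {G : SimpleGraph V} {m : V → Option V}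

/-- The invariant maintained by a matched vertex `u` during a `true`-epoch of
its `end` variable started at time `r`. -/
def uInv (E : MMExecution G m) (r t : ℕ) (u x : V) : Prop :=
  (E.cfg t).p u = some x ∧ (E.cfg t).a u = (E.cfg r).a u ∧
  (E.cfg t).b u = (E.cfg r).b u ∧ (E.cfg t).s u = true ∧
  (E.cfg t).e u = true ∧ (E.cfg t).p x = some u

lemma ppEq_elim {C : MMConfig V} {u x : V} (h : ppEq C u) (hpu : C.p u = some x) :
    C.p x = some u := by
  obtain ⟨w, hw, hw2⟩ := h
  rw [hpu] at hw
  obtain rfl : x = w := (Option.some.injEq _ _).mp hw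
  exact hw2

lemma sv_of_guardMS {C : MMConfig V} {u v : V} (huv : m u = some v)
    (h : guardMatchSecond m C u) : C.s v = true := by
  obtain ⟨-, v', hv', hsv, -⟩ := h
  obtain rfl := some_inj_of (m := m) huv hv'
  exact hsv

/-- If the partner `v` does not change its variables, a vertex `u` that rose
via `MatchSecond` keeps its state (in particular `end_u = true`). -/
lemma frozen_persist_MS (E : MMExecution G m) (r N : ℕ) {u v x : V}
    (huv : m u = some v) (hvu : m v = some u)
    (hU : ¬ guardUpdate G m (E.cfg r) u)
    (hMS : guardMatchSecond m (E.cfg r) u)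
    (hmsE : msE m (E.cfg r) u v)
    (hpux : (E.cfg r).p u = some x)
    (hbase : uInv E r (r+1) u x)
    (hfroz : ∀ t, r ≤ t → t ≤ N → (E.cfg t).loc v = (E.cfg r).loc v) :
    ∀ t, r+1 ≤ t → t ≤ N+1 → uInv E r t u x := by
  have hmu : m u ≠ none := by rw [huv]; exact Option.some_ne_none _
  have hA_r : ¬ guardUpdateA G m (E.cfg r) u := fun h => hU (Or.inl h)
  obtain ⟨hadj, hxs⟩ := inSNopt_elim (G := G) hA_r hpux
  have hask2 : askSecond m (E.cfg r) u ≠ none := hMS.1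
  have haf_r : askFirst m (E.cfg r) u = none := by
    by_contra h
    exact hask2 (askSecond_eq_none_of_askFirst m huv hvu h)
  have hsv_r : (E.cfg r).s v = true := sv_of_guardMS huv hMS
  have hasks_pu : askSecond m (E.cfg r) u = some x := by rw [← hmsE.1, hpux]
  have hpv_af : (E.cfg r).p v = askFirst m (E.cfg r) v := hmsE.2.2
  intro t ht1 ht2
  induction t, ht1 using Nat.le_induction with
  | base => exact hbase
  | succ t ht ih =>
    have htN : t ≤ N := by omega
    obtain ⟨hpu, hau, hbu, hsu, heu, hpx⟩ := ih (by omega)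
    have hvloc : (E.cfg t).loc v = (E.cfg r).loc v := hfroz t (by omega) htN
    have hav : (E.cfg t).a v = (E.cfg r).a v := congrArg MMLocal.a hvloc
    have hbv : (E.cfg t).b v = (E.cfg r).b v := congrArg MMLocal.b hvloc
    have hpv : (E.cfg t).p v = (E.cfg r).p v := congrArg MMLocal.p hvloc
    have hsv : (E.cfg t).s v = (E.cfg r).s v := congrArg MMLocal.s hvloc
    have hpur : (E.cfg t).p u = (E.cfg r).p u := by rw [hpu, hpux]
    have hask1t : askFirst m (E.cfg t) u = askFirst m (E.cfg r) u :=
      askFirst_congr huv hau hbu hav hbv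
    have hask2t : askSecond m (E.cfg t) u = askSecond m (E.cfg r) u :=
      askSecond_congr huv hvu hau hbu hav hbv
    have haskvt : askFirst m (E.cfg t) v = askFirst m (E.cfg r) v :=
      askFirst_congr hvu hav hbv hau hbu
    have hpx1 : (E.cfg (t+1)).p x = some u :=
      (single_lock E t hxs hmu hadj.symm hpx hpu).1
    have hmsEt : msE m (E.cfg t) u v := by
      refine ⟨?_, ⟨x, hpu, hpx⟩, ?_⟩
      · rw [hask2t, hasks_pu, hpu]
      · rw [hpv, haskvt]; exact hpv_af
    rcases matched_step E t u hmu with h | ⟨hg, -⟩ | ⟨-, hMF', -⟩ |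
      ⟨-, -, hMS', h⟩ | ⟨-, -, -, hg, -⟩
    · exact ⟨by rw [loc_p h, loc_p', hpu], by rw [loc_a h, loc_a', hau],
        by rw [loc_b h, loc_b', hbu], by rw [loc_s h, loc_s', hsu],
        by rw [loc_e h, loc_e', heu], hpx1⟩
    · exfalso
      have hAt : ¬ guardUpdateA G m (E.cfg t) u := fun hh =>
        hA_r ((guardUpdateA_congr hau hbu hpur).mp hh)
      exact update_blocked hAt hpu hpx hg
    · exfalso
      exact hMF'.1 (hask1t.trans haf_r)
    · refine ⟨?_, by rw [loc_a h]; exact hau, by rw [loc_b h]; exact hbu, ?_, ?_, hpx1⟩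
      · rw [loc_p h]; show askSecond m (E.cfg t) u = some x; rw [hask2t, hasks_pu]
      · rw [loc_s h]; exact pb_true ⟨v, huv, hmsEt⟩
      · rw [loc_e h]; exact pb_true ⟨v, huv, hmsEt⟩
    · exfalso
      rcases hg with ⟨-, has, -⟩ | ⟨-, -, v', hv', hsv'⟩
      · rw [hask2t] at has; exact hask2 has
      · obtain rfl := some_inj_of (m := m) huv hv'
        rw [hsv, hsv_r] at hsv'
        exact Bool.noConfusion hsv'

/-- If the partner `v` does not change its variables, a vertex `u` that rose
via `MatchFirst` keeps its state (in particular `end_u = true`). -/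
lemma frozen_persist_MF (E : MMExecution G m) (r N : ℕ) {u v x : V}
    (huv : m u = some v) (hvu : m v = some u)
    (hU : ¬ guardUpdate G m (E.cfg r) u)
    (hMF : guardMatchFirst m (E.cfg r) u)
    (hmfE : mfE m (E.cfg r) u v)
    (hpux : (E.cfg r).p u = some x)
    (hbase : uInv E r (r+1) u x)
    (hfroz : ∀ t, r ≤ t → t ≤ N → (E.cfg t).loc v = (E.cfg r).loc v) :
    ∀ t, r+1 ≤ t → t ≤ N+1 → uInv E r t u x := by
  have hmu : m u ≠ none := by rw [huv]; exact Option.some_ne_none _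
  have hA_r : ¬ guardUpdateA G m (E.cfg r) u := fun h => hU (Or.inl h)
  obtain ⟨hadj, hxs⟩ := inSNopt_elim (G := G) hA_r hpux
  have haf_pu : askFirst m (E.cfg r) u = some x := by rw [← hmfE.1, hpux]
  have haf_r : askFirst m (E.cfg r) u ≠ none := by
    rw [haf_pu]; exact Option.some_ne_none _
  have has_r : askSecond m (E.cfg r) u = none :=
    askSecond_eq_none_of_askFirst m huv hvu haf_r
  have hpv_as : (E.cfg r).p v = askSecond m (E.cfg r) v := hmfE.2.2.2.1
  have hev_r : (E.cfg r).e v = true := hmfE.2.2.2.2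
  intro t ht1 ht2
  induction t, ht1 using Nat.le_induction with
  | base => exact hbase
  | succ t ht ih =>
    have htN : t ≤ N := by omega
    obtain ⟨hpu, hau, hbu, hsu, heu, hpx⟩ := ih (by omega)
    have hvloc : (E.cfg t).loc v = (E.cfg r).loc v := hfroz t (by omega) htN
    have hav : (E.cfg t).a v = (E.cfg r).a v := congrArg MMLocal.a hvloc
    have hbv : (E.cfg t).b v = (E.cfg r).b v := congrArg MMLocal.b hvloc
    have hpv : (E.cfg t).p v = (E.cfg r).p v := congrArg MMLocal.p hvloc
    have hev : (E.cfg t).e v = (E.cfg r).e v := congrArg MMLocal.e hvloc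
    have hpur : (E.cfg t).p u = (E.cfg r).p u := by rw [hpu, hpux]
    have hask1t : askFirst m (E.cfg t) u = askFirst m (E.cfg r) u :=
      askFirst_congr huv hau hbu hav hbv
    have hask2t : askSecond m (E.cfg t) u = askSecond m (E.cfg r) u :=
      askSecond_congr huv hvu hau hbu hav hbv
    have haskv2t : askSecond m (E.cfg t) v = askSecond m (E.cfg r) v :=
      askSecond_congr hvu huv hav hbv hau hbu
    have hpx1 : (E.cfg (t+1)).p x = some u :=
      (single_lock E t hxs hmu hadj.symm hpx hpu).1
    have hmfSt : mfS m (E.cfg t) u v := by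
      refine ⟨?_, ⟨x, hpu, hpx⟩, Or.inl ?_⟩
      · rw [hask1t, haf_pu, hpu]
      · rw [hpv, haskv2t]; exact hpv_as
    have hmfEt : mfE m (E.cfg t) u v := by
      refine ⟨hmfSt.1, hmfSt.2.1, hsu, ?_, by rw [hev]; exact hev_r⟩
      rw [hpv, haskv2t]; exact hpv_as
    rcases matched_step E t u hmu with h | ⟨hg, -⟩ | ⟨-, -, h⟩ |
      ⟨-, -, hMS', -⟩ | ⟨-, -, -, hg, -⟩
    · exact ⟨by rw [loc_p h, loc_p', hpu], by rw [loc_a h, loc_a', hau],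
        by rw [loc_b h, loc_b', hbu], by rw [loc_s h, loc_s', hsu],
        by rw [loc_e h, loc_e', heu], hpx1⟩
    · exfalso
      have hAt : ¬ guardUpdateA G m (E.cfg t) u := fun hh =>
        hA_r ((guardUpdateA_congr hau hbu hpur).mp hh)
      exact update_blocked hAt hpu hpx hg
    · refine ⟨?_, by rw [loc_a h]; exact hau, by rw [loc_b h]; exact hbu, ?_, ?_, hpx1⟩
      · rw [loc_p h]; show askFirst m (E.cfg t) u = some x; rw [hask1t, haf_pu]
      · rw [loc_s h]; exact pb_true ⟨v, huv, hmfSt⟩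
      · rw [loc_e h]; exact pb_true ⟨v, huv, hmfEt⟩
    · exfalso
      exact hMS'.1 (hask2t.trans has_r)
    · exfalso
      rcases hg with ⟨haf, -, -⟩ | ⟨has2, -, -⟩
      · rw [hask1t] at haf; exact haf_r haf
      · rw [hask2t] at has2; exact has2 has_r

end Stmt19Aux4
section Stmt19Aux5

variable {V : Type*} [Fintype V] [LinearOrder V]
variable {G : SimpleGraph V} {m : V → Option V}

/-- Certification of the partner from its last variable-changing move. -/
lemma cert_of_last_change (E : MMExecution G m) (σ r2 : ℕ) {v u : V}
    (hvu : m v = some u) (hσ : σ + 1 ≤ r2)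
    (hconst : ∀ t, σ+1 ≤ t → t ≤ r2 → (E.cfg t).loc v = (E.cfg (σ+1)).loc v)
    (hchg : (E.cfg (σ+1)).loc v ≠ (E.cfg σ).loc v)
    (need : (E.cfg r2).s v = true ∨ (E.cfg r2).e v = true) :
    ∃ y, (E.cfg r2).p v = some y ∧ (E.cfg r2).p y = some v ∧
      ¬ guardUpdateA G m (E.cfg r2) v ∧ m y = none ∧ G.Adj v y ∧
      (E.cfg r2).s v = true := by
  have hmv : m v ≠ none := by rw [hvu]; exact Option.some_ne_none _
  have hlocr2 : (E.cfg r2).loc v = (E.cfg (σ+1)).loc v := hconst r2 hσ le_rfl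
  have hsr2 : (E.cfg r2).s v = (E.cfg (σ+1)).s v := congrArg MMLocal.s hlocr2
  have her2 : (E.cfg r2).e v = (E.cfg (σ+1)).e v := congrArg MMLocal.e hlocr2
  have need1 : (E.cfg (σ+1)).s v = true ∨ (E.cfg (σ+1)).e v = true := by
    rcases need with h | h
    · exact Or.inl (by rw [← hsr2]; exact h)
    · exact Or.inr (by rw [← her2]; exact h)
  suffices hcore : ∃ y, (E.cfg σ).p v = some y ∧ (E.cfg σ).p y = some v ∧
      (E.cfg (σ+1)).p v = (E.cfg σ).p v ∧ (E.cfg (σ+1)).s v = true ∧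
      (E.cfg (σ+1)).a v = (E.cfg σ).a v ∧ (E.cfg (σ+1)).b v = (E.cfg σ).b v ∧
      ¬ guardUpdateA G m (E.cfg σ) v by
    obtain ⟨y, hpv0, hpy0, hpv1, hsv1, hav1, hbv1, hA0⟩ := hcore
    obtain ⟨hadj, hys⟩ := inSNopt_elim (G := G) hA0 hpv0
    have hpveq : ∀ t, σ ≤ t → t ≤ r2 → (E.cfg t).p v = some y := by
      intro t h1 h2
      rcases Nat.eq_or_lt_of_le h1 with rfl | h1'
      · exact hpv0
      · have hl : (E.cfg t).loc v = (E.cfg (σ+1)).loc v := hconst t h1' h2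
        have hq : (E.cfg t).p v = (E.cfg (σ+1)).p v := congrArg MMLocal.p hl
        rw [hq, hpv1, hpv0]
    have hpy : ∀ t, σ ≤ t → t ≤ r2 → (E.cfg t).p y = some v := by
      intro t h1 h2
      induction t, h1 using Nat.le_induction with
      | base => exact hpy0
      | succ t ht ih =>
        exact (single_lock E t hys hmv hadj.symm (ih (by omega))
          (hpveq t ht (by omega))).1
    have hA2 : ¬ guardUpdateA G m (E.cfg r2) v := by
      intro hh
      apply hA0
      have q1 : (E.cfg r2).a v = (E.cfg (σ+1)).a v := congrArg MMLocal.a hlocr2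
      have q2 : (E.cfg r2).b v = (E.cfg (σ+1)).b v := congrArg MMLocal.b hlocr2
      have e1 : (E.cfg r2).a v = (E.cfg σ).a v := by rw [q1, hav1]
      have e2 : (E.cfg r2).b v = (E.cfg σ).b v := by rw [q2, hbv1]
      have e3 : (E.cfg r2).p v = (E.cfg σ).p v := by
        rw [hpveq r2 (by omega) le_rfl, hpv0]
      exact (guardUpdateA_congr e1 e2 e3).mp hh
    exact ⟨y, hpveq r2 (by omega) le_rfl, hpy r2 (by omega) le_rfl, hA2,
      hys, hadj, by rw [hsr2]; exact hsv1⟩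
  rcases matched_step E σ v hmv with h | ⟨-, h⟩ | ⟨hUv, -, h⟩ | ⟨hUv, -, -, h⟩ |
    ⟨-, -, -, -, h⟩
  · exact absurd h hchg
  · exfalso
    rcases need1 with hs | he
    · rw [loc_s h] at hs; exact Bool.noConfusion hs
    · rw [loc_e h] at he; exact Bool.noConfusion he
  · -- MatchFirst move of v
    have hmfS : mfS m (E.cfg σ) v u := by
      rcases need1 with hs | he
      · obtain ⟨u', hu', hmfS⟩ := of_pb_true (loc_s h ▸ hs)
        obtain rfl := some_inj_of (m := m) hvu hu'
        exact hmfS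
      · obtain ⟨u', hu', hmfE⟩ := of_pb_true (loc_e h ▸ he)
        obtain rfl := some_inj_of (m := m) hvu hu'
        exact mfS_of_mfE hmfE
    obtain ⟨y, hpvy, hpyv⟩ := hmfS.2.1
    refine ⟨y, hpvy, hpyv, ?_, ?_, by rw [loc_a h], by rw [loc_b h],
      fun hh => hUv (Or.inl hh)⟩
    · rw [loc_p h]; exact hmfS.1.symm
    · rw [loc_s h]; exact pb_true ⟨u, hvu, hmfS⟩
  · -- MatchSecond move of v
    have hmsE : msE m (E.cfg σ) v u := by
      rcases need1 with hs | he
      · obtain ⟨u', hu', hmsE⟩ := of_pb_true (loc_s h ▸ hs)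
        obtain rfl := some_inj_of (m := m) hvu hu'
        exact hmsE
      · obtain ⟨u', hu', hmsE⟩ := of_pb_true (loc_e h ▸ he)
        obtain rfl := some_inj_of (m := m) hvu hu'
        exact hmsE
    obtain ⟨y, hpvy, hpyv⟩ := hmsE.2.1
    refine ⟨y, hpvy, hpyv, ?_, ?_, by rw [loc_a h], by rw [loc_b h],
      fun hh => hUv (Or.inl hh)⟩
    · rw [loc_p h]; exact hmsE.1.symm
    · rw [loc_s h]; exact pb_true ⟨u, hvu, hmsE⟩
  · exfalso
    rcases need1 with hs | he
    · rw [loc_s h] at hs; exact Bool.noConfusion hs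
    · rw [loc_e h] at he; exact Bool.noConfusion he

end Stmt19Aux5
section Stmt19Aux6

variable {V : Type*} [Fintype V] [LinearOrder V]
variable {G : SimpleGraph V} {m : V → Option V}

/-- Once `u` rises via `MatchSecond` with a certified partner, the whole
local pattern is locked forever; in particular `end_u` stays `true`. -/
lemma lock_MS (E : MMExecution G m) (r : ℕ) {u v x y : V}
    (huv : m u = some v) (hvu : m v = some u)
    (hU : ¬ guardUpdate G m (E.cfg r) u)
    (hMS : guardMatchSecond m (E.cfg r) u)
    (hmsE : msE m (E.cfg r) u v)
    (hpux : (E.cfg r).p u = some x)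
    (hbase_u : uInv E r (r+1) u x)
    (hpv : (E.cfg r).p v = some y) (hpy : (E.cfg r).p y = some v)
    (hAv : ¬ guardUpdateA G m (E.cfg r) v)
    (hys : m y = none) (hadjvy : G.Adj v y) :
    ∀ t, r+1 ≤ t → (E.cfg t).e u = true := by
  have hmu : m u ≠ none := by rw [huv]; exact Option.some_ne_none _
  have hmv : m v ≠ none := by rw [hvu]; exact Option.some_ne_none _
  have hA_r : ¬ guardUpdateA G m (E.cfg r) u := fun h => hU (Or.inl h)
  obtain ⟨hadjux, hxs⟩ := inSNopt_elim (G := G) hA_r hpux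
  have hpx_r : (E.cfg r).p x = some u := ppEq_elim hmsE.2.1 hpux
  have hask2 : askSecond m (E.cfg r) u ≠ none := hMS.1
  have haf_r : askFirst m (E.cfg r) u = none := by
    by_contra h
    exact hask2 (askSecond_eq_none_of_askFirst m huv hvu h)
  have hasks_pu : askSecond m (E.cfg r) u = some x := by rw [← hmsE.1, hpux]
  have hpv_af : (E.cfg r).p v = askFirst m (E.cfg r) v := hmsE.2.2
  have haskv_ne : askFirst m (E.cfg r) v ≠ none := by
    rw [← hpv_af, hpv]; exact Option.some_ne_none _
  have haskv2_none : askSecond m (E.cfg r) v = none :=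
    askSecond_eq_none_of_askFirst m hvu huv haskv_ne
  -- the joint invariant
  suffices hJ : ∀ t, r+1 ≤ t → uInv E r t u x ∧
      ((E.cfg t).p v = some y ∧ (E.cfg t).a v = (E.cfg r).a v ∧
        (E.cfg t).b v = (E.cfg r).b v ∧ (E.cfg t).s v = true ∧
        (E.cfg t).p y = some v) by
    intro t ht
    exact ((hJ t ht).1).2.2.2.2.1
  intro t ht
  induction t, ht using Nat.le_induction with
  | base =>
    refine ⟨hbase_u, ?_⟩
    have hpy1 : (E.cfg (r+1)).p y = some v :=
      (single_lock E r hys hmv hadjvy.symm hpy hpv).1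
    rcases matched_step E r v hmv with h | ⟨hg, -⟩ | ⟨-, -, h⟩ |
      ⟨-, -, hMSv, -⟩ | ⟨-, -, -, hg, -⟩
    · exact ⟨by rw [loc_p h, loc_p', hpv], by rw [loc_a h, loc_a'],
        by rw [loc_b h, loc_b'],
        (by rw [loc_s h, loc_s']; exact sv_of_guardMS (m := m) huv hMS), hpy1⟩
    · exact absurd hg (update_blocked hAv hpv hpy)
    · refine ⟨?_, by rw [loc_a h], by rw [loc_b h], ?_, hpy1⟩
      · rw [loc_p h]; show askFirst m (E.cfg r) v = some y; rw [← hpv_af, hpv]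
      · rw [loc_s h]
        exact pb_true ⟨u, hvu, hpv_af, ⟨y, hpv, hpy⟩, Or.inl hmsE.1⟩
    · exact absurd haskv2_none hMSv.1
    · exfalso
      rcases hg with ⟨hafv, -, -⟩ | ⟨has2, -, -⟩
      · exact haskv_ne hafv
      · exact has2 haskv2_none
  | succ t ht ih =>
    obtain ⟨⟨hpu, hau, hbu, hsu, heu, hpx⟩, hpvt, havt, hbvt, hsvt, hpyt⟩ := ih
    have hpur : (E.cfg t).p u = (E.cfg r).p u := by rw [hpu, hpux]
    have hpvr : (E.cfg t).p v = (E.cfg r).p v := by rw [hpvt, hpv]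
    have hask1t : askFirst m (E.cfg t) u = askFirst m (E.cfg r) u :=
      askFirst_congr huv hau hbu havt hbvt
    have hask2t : askSecond m (E.cfg t) u = askSecond m (E.cfg r) u :=
      askSecond_congr huv hvu hau hbu havt hbvt
    have haskvt : askFirst m (E.cfg t) v = askFirst m (E.cfg r) v :=
      askFirst_congr hvu havt hbvt hau hbu
    have haskv2t : askSecond m (E.cfg t) v = askSecond m (E.cfg r) v :=
      askSecond_congr hvu huv havt hbvt hau hbu
    have hpx1 : (E.cfg (t+1)).p x = some u :=
      (single_lock E t hxs hmu hadjux.symm hpx hpu).1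
    have hpy1 : (E.cfg (t+1)).p y = some v :=
      (single_lock E t hys hmv hadjvy.symm hpyt hpvt).1
    have hmsEt : msE m (E.cfg t) u v := by
      refine ⟨?_, ⟨x, hpu, hpx⟩, ?_⟩
      · rw [hask2t, hasks_pu, hpu]
      · rw [hpvr, haskvt]; exact hpv_af
    constructor
    · -- u's part
      rcases matched_step E t u hmu with h | ⟨hg, -⟩ | ⟨-, hMF', -⟩ |
        ⟨-, -, -, h⟩ | ⟨-, -, -, hg, -⟩
      · exact ⟨by rw [loc_p h, loc_p', hpu], by rw [loc_a h, loc_a', hau],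
          by rw [loc_b h, loc_b', hbu], by rw [loc_s h, loc_s', hsu],
          by rw [loc_e h, loc_e', heu], hpx1⟩
      · exfalso
        have hAt : ¬ guardUpdateA G m (E.cfg t) u := fun hh =>
          hA_r ((guardUpdateA_congr hau hbu hpur).mp hh)
        exact update_blocked hAt hpu hpx hg
      · exact absurd (hask1t.trans haf_r) hMF'.1
      · refine ⟨?_, by rw [loc_a h]; exact hau, by rw [loc_b h]; exact hbu,
          ?_, ?_, hpx1⟩
        · rw [loc_p h]; show askSecond m (E.cfg t) u = some x
          rw [hask2t, hasks_pu]
        · rw [loc_s h]; exact pb_true ⟨v, huv, hmsEt⟩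
        · rw [loc_e h]; exact pb_true ⟨v, huv, hmsEt⟩
      · exfalso
        rcases hg with ⟨-, has, -⟩ | ⟨-, -, v', hv', hsv'⟩
        · exact hask2 (hask2t.symm.trans has)
        · obtain rfl := some_inj_of (m := m) huv hv'
          rw [hsvt] at hsv'
          exact Bool.noConfusion hsv'
    · -- v's part
      rcases matched_step E t v hmv with h | ⟨hg, -⟩ | ⟨-, -, h⟩ |
        ⟨-, -, hMSv, -⟩ | ⟨-, -, -, hg, -⟩
      · exact ⟨by rw [loc_p h, loc_p', hpvt], by rw [loc_a h, loc_a', havt],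
          by rw [loc_b h, loc_b', hbvt], by rw [loc_s h, loc_s', hsvt], hpy1⟩
      · exfalso
        have hAvt : ¬ guardUpdateA G m (E.cfg t) v := fun hh =>
          hAv ((guardUpdateA_congr havt hbvt hpvr).mp hh)
        exact update_blocked hAvt hpvt hpyt hg
      · refine ⟨?_, by rw [loc_a h]; exact havt, by rw [loc_b h]; exact hbvt,
          ?_, hpy1⟩
        · rw [loc_p h]; show askFirst m (E.cfg t) v = some y
          rw [haskvt, ← hpv_af, hpv]
        · rw [loc_s h]
          refine pb_true ⟨u, hvu, ?_, ⟨y, hpvt, hpyt⟩, Or.inl ?_⟩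
          · rw [hpvr, haskvt]; exact hpv_af
          · rw [hask2t, hasks_pu, hpu]
      · exact absurd (haskv2t.trans haskv2_none) hMSv.1
      · exfalso
        rcases hg with ⟨hafv, -, -⟩ | ⟨has2, -, -⟩
        · exact haskv_ne (haskvt.symm.trans hafv)
        · exact has2 (haskv2t.trans haskv2_none)

/-- Once `u` rises via `MatchFirst` with a certified partner, the whole
local pattern is locked forever; in particular `end_u` stays `true`. -/
lemma lock_MF (E : MMExecution G m) (r : ℕ) {u v x y : V}
    (huv : m u = some v) (hvu : m v = some u)
    (hU : ¬ guardUpdate G m (E.cfg r) u)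
    (hmfE : mfE m (E.cfg r) u v)
    (hpux : (E.cfg r).p u = some x)
    (hbase_u : uInv E r (r+1) u x)
    (hpv : (E.cfg r).p v = some y) (hpy : (E.cfg r).p y = some v)
    (hAv : ¬ guardUpdateA G m (E.cfg r) v)
    (hys : m y = none) (hadjvy : G.Adj v y)
    (hsv_r : (E.cfg r).s v = true) (hev_r : (E.cfg r).e v = true) :
    ∀ t, r+1 ≤ t → (E.cfg t).e u = true := by
  have hmu : m u ≠ none := by rw [huv]; exact Option.some_ne_none _
  have hmv : m v ≠ none := by rw [hvu]; exact Option.some_ne_none _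
  have hA_r : ¬ guardUpdateA G m (E.cfg r) u := fun h => hU (Or.inl h)
  obtain ⟨hadjux, hxs⟩ := inSNopt_elim (G := G) hA_r hpux
  have hpx_r : (E.cfg r).p x = some u := ppEq_elim hmfE.2.1 hpux
  have haf_pu : askFirst m (E.cfg r) u = some x := by rw [← hmfE.1, hpux]
  have haf_r : askFirst m (E.cfg r) u ≠ none := by
    rw [haf_pu]; exact Option.some_ne_none _
  have has_r : askSecond m (E.cfg r) u = none :=
    askSecond_eq_none_of_askFirst m huv hvu haf_r
  have hpv_as : (E.cfg r).p v = askSecond m (E.cfg r) v := hmfE.2.2.2.1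
  have hsur : (E.cfg r).s u = true := hmfE.2.2.1
  have haskv2_y : askSecond m (E.cfg r) v = some y := by rw [← hpv_as, hpv]
  have haskv2_ne : askSecond m (E.cfg r) v ≠ none := by
    rw [haskv2_y]; exact Option.some_ne_none _
  have hafv_none : askFirst m (E.cfg r) v = none := by
    by_contra h
    exact haskv2_ne (askSecond_eq_none_of_askFirst m hvu huv h)
  suffices hJ : ∀ t, r+1 ≤ t → uInv E r t u x ∧
      ((E.cfg t).p v = some y ∧ (E.cfg t).a v = (E.cfg r).a v ∧
        (E.cfg t).b v = (E.cfg r).b v ∧ (E.cfg t).s v = true ∧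
        (E.cfg t).e v = true ∧ (E.cfg t).p y = some v) by
    intro t ht
    exact ((hJ t ht).1).2.2.2.2.1
  intro t ht
  induction t, ht using Nat.le_induction with
  | base =>
    refine ⟨hbase_u, ?_⟩
    have hpy1 : (E.cfg (r+1)).p y = some v :=
      (single_lock E r hys hmv hadjvy.symm hpy hpv).1
    rcases matched_step E r v hmv with h | ⟨hg, -⟩ | ⟨-, hMFv, -⟩ |
      ⟨-, -, -, h⟩ | ⟨-, -, -, hg, -⟩
    · exact ⟨by rw [loc_p h, loc_p', hpv], by rw [loc_a h, loc_a'],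
        by rw [loc_b h, loc_b'], by rw [loc_s h, loc_s', hsv_r],
        by rw [loc_e h, loc_e', hev_r], hpy1⟩
    · exact absurd hg (update_blocked hAv hpv hpy)
    · exact absurd hafv_none hMFv.1
    · have hmsEv : msE m (E.cfg r) v u := ⟨hpv_as, ⟨y, hpv, hpy⟩, hmfE.1⟩
      refine ⟨?_, by rw [loc_a h], by rw [loc_b h], ?_, ?_, hpy1⟩
      · rw [loc_p h]; show askSecond m (E.cfg r) v = some y; exact haskv2_y
      · rw [loc_s h]; exact pb_true ⟨u, hvu, hmsEv⟩
      · rw [loc_e h]; exact pb_true ⟨u, hvu, hmsEv⟩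
    · exfalso
      rcases hg with ⟨-, has, -⟩ | ⟨-, -, u', hu', hsu'⟩
      · exact haskv2_ne has
      · obtain rfl := some_inj_of (m := m) hvu hu'
        rw [hsur] at hsu'
        exact Bool.noConfusion hsu'
  | succ t ht ih =>
    obtain ⟨⟨hpu, hau, hbu, hsu, heu, hpx⟩, hpvt, havt, hbvt, hsvt, hevt, hpyt⟩ := ih
    have hpur : (E.cfg t).p u = (E.cfg r).p u := by rw [hpu, hpux]
    have hpvr : (E.cfg t).p v = (E.cfg r).p v := by rw [hpvt, hpv]
    have hask1t : askFirst m (E.cfg t) u = askFirst m (E.cfg r) u :=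
      askFirst_congr huv hau hbu havt hbvt
    have hask2t : askSecond m (E.cfg t) u = askSecond m (E.cfg r) u :=
      askSecond_congr huv hvu hau hbu havt hbvt
    have haskvt : askFirst m (E.cfg t) v = askFirst m (E.cfg r) v :=
      askFirst_congr hvu havt hbvt hau hbu
    have haskv2t : askSecond m (E.cfg t) v = askSecond m (E.cfg r) v :=
      askSecond_congr hvu huv havt hbvt hau hbu
    have hpx1 : (E.cfg (t+1)).p x = some u :=
      (single_lock E t hxs hmu hadjux.symm hpx hpu).1
    have hpy1 : (E.cfg (t+1)).p y = some v :=
      (single_lock E t hys hmv hadjvy.symm hpyt hpvt).1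
    have hpv_ast : (E.cfg t).p v = askSecond m (E.cfg t) v := by
      rw [hpvr, haskv2t]; exact hpv_as
    have hmfSt : mfS m (E.cfg t) u v := by
      refine ⟨?_, ⟨x, hpu, hpx⟩, Or.inl hpv_ast⟩
      rw [hask1t, haf_pu, hpu]
    have hmfEt : mfE m (E.cfg t) u v :=
      ⟨hmfSt.1, hmfSt.2.1, hsu, hpv_ast, hevt⟩
    have hmsEvt : msE m (E.cfg t) v u := by
      refine ⟨hpv_ast, ⟨y, hpvt, hpyt⟩, ?_⟩
      rw [hask1t, haf_pu, hpu]
    constructor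
    · -- u's part
      rcases matched_step E t u hmu with h | ⟨hg, -⟩ | ⟨-, -, h⟩ |
        ⟨-, -, hMS', -⟩ | ⟨-, -, -, hg, -⟩
      · exact ⟨by rw [loc_p h, loc_p', hpu], by rw [loc_a h, loc_a', hau],
          by rw [loc_b h, loc_b', hbu], by rw [loc_s h, loc_s', hsu],
          by rw [loc_e h, loc_e', heu], hpx1⟩
      · exfalso
        have hAt : ¬ guardUpdateA G m (E.cfg t) u := fun hh =>
          hA_r ((guardUpdateA_congr hau hbu hpur).mp hh)
        exact update_blocked hAt hpu hpx hg
      · refine ⟨?_, by rw [loc_a h]; exact hau, by rw [loc_b h]; exact hbu,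
          ?_, ?_, hpx1⟩
        · rw [loc_p h]; show askFirst m (E.cfg t) u = some x
          rw [hask1t, haf_pu]
        · rw [loc_s h]; exact pb_true ⟨v, huv, hmfSt⟩
        · rw [loc_e h]; exact pb_true ⟨v, huv, hmfEt⟩
      · exact absurd (hask2t.trans has_r) hMS'.1
      · exfalso
        rcases hg with ⟨haf, -, -⟩ | ⟨has2, -, -⟩
        · exact haf_r (hask1t.symm.trans haf)
        · exact has2 (hask2t.trans has_r)
    · -- v's part
      rcases matched_step E t v hmv with h | ⟨hg, -⟩ | ⟨-, hMFv, -⟩ |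
        ⟨-, -, -, h⟩ | ⟨-, -, -, hg, -⟩
      · exact ⟨by rw [loc_p h, loc_p', hpvt], by rw [loc_a h, loc_a', havt],
          by rw [loc_b h, loc_b', hbvt], by rw [loc_s h, loc_s', hsvt],
          by rw [loc_e h, loc_e', hevt], hpy1⟩
      · exfalso
        have hAvt : ¬ guardUpdateA G m (E.cfg t) v := fun hh =>
          hAv ((guardUpdateA_congr havt hbvt hpvr).mp hh)
        exact update_blocked hAvt hpvt hpyt hg
      · exact absurd (haskvt.trans hafv_none) hMFv.1
      · refine ⟨?_, by rw [loc_a h]; exact havt, by rw [loc_b h]; exact hbvt,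
          ?_, ?_, hpy1⟩
        · rw [loc_p h]; show askSecond m (E.cfg t) v = some y
          rw [haskv2t, haskv2_y]
        · rw [loc_s h]; exact pb_true ⟨u, hvu, hmsEvt⟩
        · rw [loc_e h]; exact pb_true ⟨u, hvu, hmsEvt⟩
      · exfalso
        rcases hg with ⟨-, has, -⟩ | ⟨-, -, u', hu', hsu'⟩
        · exact haskv2_ne (haskv2t.symm.trans has)
        · obtain rfl := some_inj_of (m := m) hvu hu'
          rw [hsu] at hsu'
          exact Bool.noConfusion hsu'

end Stmt19Aux6
section Stmt19Aux7

variable {V : Type*} [Fintype V] [LinearOrder V]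
variable {G : SimpleGraph V} {m : V → Option V}

/-- A matched vertex raises its `end` variable at most twice. -/
lemma no_three_rises (E : MMExecution G m) {u v : V}
    (huv : m u = some v) (hvu : m v = some u) {r1 r2 r3 : ℕ}
    (h12 : r1 < r2) (h23 : r2 < r3)
    (hR1 : (E.cfg r1).e u = false ∧ (E.cfg (r1+1)).e u = true)
    (hR2 : (E.cfg r2).e u = false ∧ (E.cfg (r2+1)).e u = true)
    (hR3 : (E.cfg r3).e u = false ∧ (E.cfg (r3+1)).e u = true) : False := by
  have hmu : m u ≠ none := by rw [huv]; exact Option.some_ne_none _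
  -- anatomy of the first rise
  obtain ⟨hU1, ha1, hb1, hp1, hs1, hcase1⟩ := rise_anatomy E r1 huv hR1.1 hR1.2
  have hppEq1 : ppEq (E.cfg r1) u := by
    rcases hcase1 with ⟨-, h⟩ | ⟨-, -, h⟩
    · exact h.2.1
    · exact h.2.1
  obtain ⟨x1, hpu1, hpx1⟩ := hppEq1
  have hA1 : ¬ guardUpdateA G m (E.cfg r1) u := fun h => hU1 (Or.inl h)
  obtain ⟨hadj1, hx1s⟩ := inSNopt_elim (G := G) hA1 hpu1
  have hbase1 : uInv E r1 (r1+1) u x1 :=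
    ⟨hp1.trans hpu1, ha1, hb1, hs1, hR1.2,
      (single_lock E r1 hx1s hmu hadj1.symm hpx1 hpu1).1⟩
  -- there is a change of v's variables in [r1, r2)
  have hchange : ∃ σ, σ < r2 ∧ (E.cfg (σ+1)).loc v ≠ (E.cfg σ).loc v := by
    by_contra hno
    push_neg at hno
    have hfroz : ∀ t, r1 ≤ t → t ≤ r2 - 1 → (E.cfg t).loc v = (E.cfg r1).loc v := by
      intro t ht1 ht2
      induction t, ht1 using Nat.le_induction with
      | base => rfl
      | succ t ht ih =>
        rw [hno t (by omega), ih (by omega)]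
    have heur2 : (E.cfg r2).e u = true := by
      have h2 : r2 - 1 + 1 = r2 := by omega
      rcases hcase1 with ⟨hMF, hmfE⟩ | ⟨-, hMS, hmsE⟩
      · have := frozen_persist_MF E r1 (r2-1) huv hvu hU1 hMF hmfE hpu1 hbase1
          hfroz r2 (by omega) (by omega)
        exact this.2.2.2.2.1
      · have := frozen_persist_MS E r1 (r2-1) huv hvu hU1 hMS hmsE hpu1 hbase1
          hfroz r2 (by omega) (by omega)
        exact this.2.2.2.2.1
    rw [hR2.1] at heur2
    exact Bool.noConfusion heur2
  -- the last change of v's variables before r2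
  obtain ⟨σ0, hσ0lt, hσ0chg⟩ := hchange
  have hSne : (Finset.filter
      (fun σ => (E.cfg (σ+1)).loc v ≠ (E.cfg σ).loc v) (Finset.range r2)).Nonempty :=
    ⟨σ0, Finset.mem_filter.mpr ⟨Finset.mem_range.mpr hσ0lt, hσ0chg⟩⟩
  obtain ⟨σ, hσmem, hσmax⟩ : ∃ σ ∈ Finset.filter
      (fun σ => (E.cfg (σ+1)).loc v ≠ (E.cfg σ).loc v) (Finset.range r2),
      ∀ t ∈ Finset.filter (fun σ => (E.cfg (σ+1)).loc v ≠ (E.cfg σ).loc v)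
        (Finset.range r2), t ≤ σ :=
    ⟨_, Finset.max'_mem _ hSne, fun t ht => Finset.le_max' _ t ht⟩
  rw [Finset.mem_filter, Finset.mem_range] at hσmem
  obtain ⟨hσlt, hσchg⟩ := hσmem
  have hnochg : ∀ t, σ < t → t < r2 → (E.cfg (t+1)).loc v = (E.cfg t).loc v := by
    intro t h1 h2
    by_contra hc
    have ht : t ∈ Finset.filter (fun σ => (E.cfg (σ+1)).loc v ≠ (E.cfg σ).loc v)
        (Finset.range r2) := Finset.mem_filter.mpr ⟨Finset.mem_range.mpr h2, hc⟩
    exact absurd (hσmax t ht) (by omega)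
  have hconst : ∀ t, σ+1 ≤ t → t ≤ r2 → (E.cfg t).loc v = (E.cfg (σ+1)).loc v := by
    intro t ht1 ht2
    induction t, ht1 using Nat.le_induction with
    | base => rfl
    | succ t ht ih =>
      rw [hnochg t (by omega) (by omega), ih (by omega)]
  -- anatomy of the second rise
  obtain ⟨hU2, ha2, hb2, hp2, hs2, hcase2⟩ := rise_anatomy E r2 huv hR2.1 hR2.2
  have hppEq2 : ppEq (E.cfg r2) u := by
    rcases hcase2 with ⟨-, h⟩ | ⟨-, -, h⟩
    · exact h.2.1
    · exact h.2.1
  obtain ⟨x, hpux2, hpx2⟩ := hppEq2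
  have hA2 : ¬ guardUpdateA G m (E.cfg r2) u := fun h => hU2 (Or.inl h)
  obtain ⟨hadj2, hxs2⟩ := inSNopt_elim (G := G) hA2 hpux2
  have hbase2 : uInv E r2 (r2+1) u x :=
    ⟨hp2.trans hpux2, ha2, hb2, hs2, hR2.2,
      (single_lock E r2 hxs2 hmu hadj2.symm hpx2 hpux2).1⟩
  have need : (E.cfg r2).s v = true ∨ (E.cfg r2).e v = true := by
    rcases hcase2 with ⟨-, hmfE⟩ | ⟨-, hMS, -⟩
    · exact Or.inr hmfE.2.2.2.2
    · exact Or.inl (sv_of_guardMS (m := m) huv hMS)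
  obtain ⟨y, hpv2, hpy2, hAv2, hys, hadjvy, hsv2⟩ :=
    cert_of_last_change E σ r2 hvu (by omega) hconst hσchg need
  have hlock : ∀ t, r2+1 ≤ t → (E.cfg t).e u = true := by
    rcases hcase2 with ⟨-, hmfE⟩ | ⟨-, hMS, hmsE⟩
    · exact lock_MF E r2 huv hvu hU2 hmfE hpux2 hbase2 hpv2 hpy2 hAv2 hys
        hadjvy hsv2 hmfE.2.2.2.2
    · exact lock_MS E r2 huv hvu hU2 hMS hmsE hpux2 hbase2 hpv2 hpy2 hAv2
        hys hadjvy
  have := hlock r3 (by omega)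
  rw [hR3.1] at this
  exact Bool.noConfusion this

end Stmt19Aux7
section Stmt19Aux8

variable {V : Type*} [Fintype V] [LinearOrder V]
variable {G : SimpleGraph V} {m : V → Option V}

/-- Between two copy events charged to the same matched vertex `u` there is a
rise of `end_u`. -/
lemma rise_between_events (E : MMExecution G m) {u x x' : V} {i j : ℕ}
    (hij : i < j) (hmu : m u ≠ none) (hxs : m x = none) (hadjxu : G.Adj x u)
    (hpux_i : (E.cfg i).p u = some x) (heu_i : (E.cfg i).e u = true)
    (hpx_i1 : (E.cfg (i+1)).p x = some u) (hex_i1 : (E.cfg (i+1)).e x = true)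
    (hpux_j : (E.cfg j).p u = some x') (heu_j : (E.cfg j).e u = true)
    (hex'_j : (E.cfg j).e x' = false) :
    ∃ t, i ≤ t ∧ t < j ∧ (E.cfg t).e u = false ∧ (E.cfg (t+1)).e u = true := by
  by_contra hno
  push_neg at hno
  have hdown : ∀ d, d ≤ j - i → (E.cfg (j - d)).e u = true := by
    intro d
    induction d with
    | zero => intro _; simpa using heu_j
    | succ d ih =>
      intro hd
      have h1 : j - d = (j - (d+1)) + 1 := by omega
      have h2 : (E.cfg ((j - (d+1)) + 1)).e u = true := by
        rw [← h1]; exact ih (by omega)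
      rcases Bool.eq_false_or_eq_true ((E.cfg (j - (d+1))).e u) with ht | hf
      · exact ht
      · exact absurd h2 (hno (j - (d+1)) (by omega) (by omega) hf)
  have halltrue : ∀ t, i ≤ t → t ≤ j → (E.cfg t).e u = true := by
    intro t h1 h2
    have := hdown (j - t) (by omega)
    rwa [show j - (j - t) = t by omega] at this
  have hQ : ∀ t, i+1 ≤ t → t ≤ j →
      (E.cfg t).p u = some x ∧ (E.cfg t).p x = some u ∧ (E.cfg t).e x = true := by
    intro t ht1 ht2
    induction t, ht1 using Nat.le_induction with
    | base =>
      refine ⟨?_, hpx_i1, hex_i1⟩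
      rw [(pab_const_of_e_true E i u (halltrue i (by omega) (by omega))
        (halltrue (i+1) (by omega) (by omega))).1, hpux_i]
    | succ t ht ih =>
      obtain ⟨h1, h2, h3⟩ := ih (by omega)
      have hlock := single_lock E t hxs hmu hadjxu h2 h1
      refine ⟨?_, hlock.1, hlock.2 (halltrue t (by omega) (by omega)) h3⟩
      rw [(pab_const_of_e_true E t u (halltrue t (by omega) (by omega))
        (halltrue (t+1) (by omega) (by omega))).1, h1]
  obtain ⟨h1, h2, h3⟩ := hQ j (by omega) le_rfl
  rw [hpux_j] at h1
  obtain rfl : x' = x := (Option.some.injEq _ _).mp h1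
  rw [hex'_j] at h3
  exact Bool.noConfusion h3

end Stmt19Aux8
section Stmt19Aux9

lemma four_chain {I : Finset ℕ} (h : 4 ≤ I.card) :
    ∃ a b c d, a ∈ I ∧ b ∈ I ∧ c ∈ I ∧ d ∈ I ∧ a < b ∧ b < c ∧ c < d := by
  have h0 : I.Nonempty := Finset.card_pos.mp (by omega)
  obtain ⟨d, hd, hdmax⟩ : ∃ d ∈ I, ∀ t ∈ I, t ≤ d :=
    ⟨_, I.max'_mem h0, fun t ht => I.le_max' t ht⟩
  have hc1 : 3 ≤ (I.erase d).card := by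
    rw [Finset.card_erase_of_mem hd]; omega
  have h1 : (I.erase d).Nonempty := Finset.card_pos.mp (by omega)
  obtain ⟨c, hc, hcmax⟩ : ∃ c ∈ I.erase d, ∀ t ∈ I.erase d, t ≤ c :=
    ⟨_, Finset.max'_mem _ h1, fun t ht => Finset.le_max' _ t ht⟩
  have hc2 : 2 ≤ ((I.erase d).erase c).card := by
    rw [Finset.card_erase_of_mem hc]; omega
  have h2 : ((I.erase d).erase c).Nonempty := Finset.card_pos.mp (by omega)
  obtain ⟨b, hb, hbmax⟩ : ∃ b ∈ (I.erase d).erase c, ∀ t ∈ (I.erase d).erase c, t ≤ b :=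
    ⟨_, Finset.max'_mem _ h2, fun t ht => Finset.le_max' _ t ht⟩
  have hc3 : 1 ≤ (((I.erase d).erase c).erase b).card := by
    rw [Finset.card_erase_of_mem hb]; omega
  have h3 : (((I.erase d).erase c).erase b).Nonempty := Finset.card_pos.mp (by omega)
  obtain ⟨a, ha⟩ := h3
  have haB := Finset.mem_erase.mp ha
  have hbC := Finset.mem_erase.mp hb
  have hcD := Finset.mem_erase.mp hc
  have haC := Finset.mem_erase.mp haB.2
  have haD := Finset.mem_erase.mp haC.2
  have hbD := Finset.mem_erase.mp hbC.2
  refine ⟨a, b, c, d, haD.2, hbD.2, hcD.2, hd, ?_, ?_, ?_⟩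
  · exact lt_of_le_of_ne (hbmax a haB.2) haB.1
  · exact lt_of_le_of_ne (hcmax b hbC.2) hbC.1
  · exact lt_of_le_of_ne (hdmax c hcD.2) hcD.1

end Stmt19Aux9
/-- In any execution, single vertices write `True` into their `end`
variable in at most `3μ` moves in total. -/
theorem stmt19 {V : Type*} [Fintype V] [LinearOrder V]
    (G : SimpleGraph V) (m : V → Option V) (hm : MaxMatchingOn G m)
    (E : MMExecution G m) :
    ∀ T : Finset (ℕ × V),
      (∀ q ∈ T, m q.2 = none ∧ q.2 ∈ E.act q.1 ∧
        (E.cfg q.1).e q.2 = false ∧ (E.cfg (q.1 + 1)).e q.2 = true) →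
      T.card ≤ 3 * muV m := by
  intro T hT
  classical
  set f : ℕ × V → V := fun q => ((E.cfg q.1).p q.2).getD q.2 with hf
  have hev : ∀ q ∈ T, ∃ w, f q = w ∧ m q.2 = none ∧ (E.cfg q.1).e q.2 = false ∧
      (E.cfg q.1).p q.2 = some w ∧ G.Adj q.2 w ∧ m w ≠ none ∧
      (E.cfg q.1).p w = some q.2 ∧ (E.cfg q.1).e w = true ∧
      (E.cfg (q.1+1)).p q.2 = some w ∧ (E.cfg (q.1+1)).e q.2 = true := by
    intro q hq
    obtain ⟨h1, -, h3, h4⟩ := hT q hq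
    obtain ⟨w, hw⟩ := event_anatomy E q.1 q.2 h1 h3 h4
    refine ⟨w, ?_, h1, h3, hw.1, hw.2.1, hw.2.2.1, hw.2.2.2.1, hw.2.2.2.2.1,
      hw.2.2.2.2.2.1, hw.2.2.2.2.2.2⟩
    rw [hf]
    simp [hw.1]
  have hmaps : ∀ q ∈ T, f q ∈ Finset.univ.filter (fun w : V => m w ≠ none) := by
    intro q hq
    obtain ⟨w, hfq, h⟩ := hev q hq
    rw [hfq]
    exact Finset.mem_filter.mpr ⟨Finset.mem_univ _, h.2.2.2.2.1⟩
  rw [Finset.card_eq_sum_card_fiberwise hmaps]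
  have hfiber : ∀ w ∈ Finset.univ.filter (fun w : V => m w ≠ none),
      (T.filter fun q => f q = w).card ≤ 3 := by
    intro w hwmem
    have hw : m w ≠ none := (Finset.mem_filter.mp hwmem).2
    by_contra hc
    push_neg at hc
    obtain ⟨v, hwv⟩ : ∃ v, m w = some v := by
      cases h : m w with
      | none => exact absurd h hw
      | some v => exact ⟨v, rfl⟩
    have hvw : m v = some w := hm.symm w v hwv
    have hED : ∀ q ∈ T.filter (fun q => f q = w), m q.2 = none ∧
        (E.cfg q.1).e q.2 = false ∧ G.Adj q.2 w ∧
        (E.cfg q.1).p w = some q.2 ∧ (E.cfg q.1).e w = true ∧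
        (E.cfg (q.1+1)).p q.2 = some w ∧ (E.cfg (q.1+1)).e q.2 = true := by
      intro q hq
      have hqT : q ∈ T := (Finset.mem_filter.mp hq).1
      have hfq : f q = w := (Finset.mem_filter.mp hq).2
      obtain ⟨w', hfq', h⟩ := hev q hqT
      obtain rfl : w' = w := by rw [← hfq', hfq]
      exact ⟨h.1, h.2.1, h.2.2.2.1, h.2.2.2.2.2.1, h.2.2.2.2.2.2.1,
        h.2.2.2.2.2.2.2.1, h.2.2.2.2.2.2.2.2⟩
    have hinj : Set.InjOn Prod.fst ((T.filter (fun q => f q = w) : Finset (ℕ × V)) : Set (ℕ × V)) := by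
      intro q hq q' hq' heq
      have h1 := (hED q (by simpa using hq)).2.2.2.1
      have h2 := (hED q' (by simpa using hq')).2.2.2.1
      rw [← heq] at h2
      rw [h1] at h2
      exact Prod.ext heq ((Option.some.injEq _ _).mp h2)
    have hcard4 : 4 ≤ ((T.filter (fun q => f q = w)).image Prod.fst).card := by
      rw [Finset.card_image_of_injOn hinj]
      omega
    obtain ⟨i0, i1, i2, i3, m0, m1, m2, m3, h01, h12, h23⟩ := four_chain hcard4
    obtain ⟨q0, hq0, hq0i⟩ := Finset.mem_image.mp m0
    obtain ⟨q1, hq1, hq1i⟩ := Finset.mem_image.mp m1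
    obtain ⟨q2, hq2, hq2i⟩ := Finset.mem_image.mp m2
    obtain ⟨q3, hq3, hq3i⟩ := Finset.mem_image.mp m3
    obtain ⟨hs0, he0, hadj0, hpw0, hew0, hpq0, heq0⟩ := hED q0 hq0
    obtain ⟨hs1, he1, hadj1, hpw1, hew1, hpq1, heq1⟩ := hED q1 hq1
    obtain ⟨hs2, he2, hadj2, hpw2, hew2, hpq2, heq2⟩ := hED q2 hq2
    obtain ⟨hs3, he3, hadj3, hpw3, hew3, hpq3, heq3⟩ := hED q3 hq3
    subst hq0i hq1i hq2i hq3i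
    obtain ⟨t1, ht1a, ht1b, hrise1⟩ := rise_between_events E h01 hw hs0 hadj0
      hpw0 hew0 hpq0 heq0 hpw1 hew1 he1
    obtain ⟨t2, ht2a, ht2b, hrise2⟩ := rise_between_events E h12 hw hs1 hadj1
      hpw1 hew1 hpq1 heq1 hpw2 hew2 he2
    obtain ⟨t3, ht3a, ht3b, hrise3⟩ := rise_between_events E h23 hw hs2 hadj2
      hpw2 hew2 hpq2 heq2 hpw3 hew3 he3
    exact no_three_rises E hwv hvw (by omega) (by omega)
      ⟨hrise1.1, hrise1.2⟩ ⟨hrise2.1, hrise2.2⟩ ⟨hrise3.1, hrise3.2⟩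
  refine le_trans (Finset.sum_le_sum hfiber) ?_
  rw [Finset.sum_const, smul_eq_mul]
  have hμ : (Finset.univ.filter (fun w : V => m w ≠ none)).card = muV m := rfl
  rw [hμ, Nat.mul_comm]
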